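/- Let s ≥ 1 and S = {i₁(s+1)+1, i₂(s+1)+2, …, i_s(s+1)+s} for arbitrary integers i₁, …, i_s. Then the domination ratio of Γ(ℤ, S) equals 1/(s+1). In particular, the set of all multiples of s+1 is an efficient dominating set. -/

import Mathlib

open Filter Pointwise

/-- Lower density of a set of integers. -/
noncomputable def lowerDensity (D : Set ℤ) : ℝ :=
  Filter.liminf (fun n : ℕ =>
    ((D ∩ Set.Icc (-(n : ℤ)) (n : ℤ)).ncard : ℝ) / (2 * (n : ℝ) + 1)) Filter.atTop

/-- `D` is a dominating set of the integer distance digraph `Γ(ℤ,S)`. -/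
def Dominating (S D : Set ℤ) : Prop :=
  ∀ m : ℤ, m ∈ D ∨ ∃ u ∈ D, ∃ s ∈ S, m = u + s

/-- Domination ratio of `Γ(ℤ,S)`. -/
noncomputable def dominationRatio (S : Set ℤ) : ℝ :=
  sInf (lowerDensity '' {D : Set ℤ | Dominating S D})

/-- `D` is an efficient dominating set of `Γ(ℤ,S)`: every integer is dominated
by exactly one element of `D`. -/
def EffDominating (S D : Set ℤ) : Prop :=
  ∀ m : ℤ, ∃! u, u ∈ D ∧ (u = m ∨ m - u ∈ S)

private lemma aux_tendsto (a c : ℝ) :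
    Tendsto (fun n : ℕ => a + c / (2 * (n : ℝ) + 1)) atTop (nhds a) := by
  have h2 : Tendsto (fun n : ℕ => 2 * (n : ℝ) + 1) atTop atTop :=
    tendsto_atTop_add_const_right _ _
      (Tendsto.const_mul_atTop (by norm_num) tendsto_natCast_atTop_atTop)
  have := (tendsto_const_nhds (x := a) (f := atTop (α := ℕ))).add
    (Tendsto.div_atTop (tendsto_const_nhds (x := c)) h2)
  simpa using this

/-- The density quotient is nonnegative. -/
private lemma densfun_nonneg (D : Set ℤ) (n : ℕ) :
    0 ≤ ((D ∩ Set.Icc (-(n : ℤ)) (n : ℤ)).ncard : ℝ) / (2 * (n : ℝ) + 1) := by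
  positivity

/-- The density quotient is at most 1. -/
private lemma densfun_le_one (D : Set ℤ) (n : ℕ) :
    ((D ∩ Set.Icc (-(n : ℤ)) (n : ℤ)).ncard : ℝ) / (2 * (n : ℝ) + 1) ≤ 1 := by
  have h1 : (D ∩ Set.Icc (-(n : ℤ)) (n : ℤ)).ncard ≤ (Set.Icc (-(n : ℤ)) (n : ℤ)).ncard :=
    Set.ncard_le_ncard Set.inter_subset_right (Set.finite_Icc _ _)
  have h2 : (Set.Icc (-(n : ℤ)) (n : ℤ)).ncard = 2 * n + 1 := by
    rw [← Finset.coe_Icc, Set.ncard_coe_finset, Int.card_Icc]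
    omega
  rw [div_le_one (by positivity)]
  rw [h2] at h1
  have : ((D ∩ Set.Icc (-(n : ℤ)) (n : ℤ)).ncard : ℝ) ≤ (2 * n + 1 : ℕ) := by
    exact_mod_cast h1
  push_cast at this ⊢
  linarith

private lemma lowerDensity_ge (s : ℤ) (hs : 1 ≤ s) (i : ℤ → ℤ) (S : Set ℤ)
    (hS : S = {t : ℤ | ∃ j : ℤ, 1 ≤ j ∧ j ≤ s ∧ t = i j * (s + 1) + j})
    (D : Set ℤ) (hD : Dominating S D) : 1 / ((s : ℝ) + 1) ≤ lowerDensity D := by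
  classical
  set T : Finset ℤ := insert 0 ((Finset.Icc 1 s).image fun j => i j * (s + 1) + j) with hT
  set M : ℕ := T.sup Int.natAbs with hM
  have hTcard : (T.card : ℤ) ≤ s + 1 := by
    have h1 := Finset.card_insert_le (0 : ℤ) ((Finset.Icc 1 s).image fun j => i j * (s + 1) + j)
    have h2 := Finset.card_image_le (s := Finset.Icc (1 : ℤ) s) (f := fun j => i j * (s + 1) + j)
    have h3 : (Finset.Icc (1 : ℤ) s).card = s.toNat := by rw [Int.card_Icc]; omega
    rw [h3] at h2
    rw [← hT] at h1
    omega
  have key : ∀ n : ℕ, M ≤ n →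
      (2 * ((n : ℝ) - M) + 1) ≤ ((s : ℝ) + 1) * ((D ∩ Set.Icc (-(n : ℤ)) (n : ℤ)).ncard : ℝ) := by
    intro n hn
    have hfin : (D ∩ Set.Icc (-(n : ℤ)) (n : ℤ)).Finite :=
      (Set.finite_Icc _ _).inter_of_right _
    have hsub : Finset.Icc (-((n : ℤ) - M)) ((n : ℤ) - M) ⊆ hfin.toFinset + T := by
      intro m hm
      simp only [Finset.mem_Icc] at hm
      have hget : ∃ u ∈ D, ∃ t ∈ T, m = u + t := by
        rcases hD m with h | ⟨u, hu, t, ht, rfl⟩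
        · exact ⟨m, h, 0, Finset.mem_insert_self _ _, by ring⟩
        · refine ⟨u, hu, t, ?_, rfl⟩
          rw [hS] at ht
          obtain ⟨j, hj1, hj2, rfl⟩ := ht
          exact Finset.mem_insert_of_mem
            (Finset.mem_image_of_mem _ (Finset.mem_Icc.2 ⟨hj1, hj2⟩))
      obtain ⟨u, hu, t, ht, rfl⟩ := hget
      have htM : t.natAbs ≤ M := Finset.le_sup ht
      refine Finset.mem_add.2 ⟨u, ?_, t, ht, rfl⟩
      rw [Set.Finite.mem_toFinset]
      exact ⟨hu, Set.mem_Icc.2 ⟨by omega, by omega⟩⟩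
    have hcard1 : (Finset.Icc (-((n : ℤ) - M)) ((n : ℤ) - M)).card = 2 * (n - M) + 1 := by
      rw [Int.card_Icc]; omega
    have hcard2 := (Finset.card_le_card hsub).trans Finset.card_add_le
    have hcard3 : hfin.toFinset.card = (D ∩ Set.Icc (-(n : ℤ)) (n : ℤ)).ncard :=
      (Set.ncard_eq_toFinset_card _ hfin).symm
    rw [hcard1, hcard3] at hcard2
    have hZ : (2 * ((n : ℤ) - M) + 1) ≤ (s + 1) * ((D ∩ Set.Icc (-(n : ℤ)) (n : ℤ)).ncard : ℤ) := by
      have h4 : ((2 * (n - M) + 1 : ℕ) : ℤ) ≤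
          ((D ∩ Set.Icc (-(n : ℤ)) (n : ℤ)).ncard : ℤ) * (T.card : ℤ) := by exact_mod_cast hcard2
      have h5 : (0 : ℤ) ≤ ((D ∩ Set.Icc (-(n : ℤ)) (n : ℤ)).ncard : ℤ) := by positivity
      push_cast [Nat.cast_sub hn] at h4
      nlinarith [hTcard]
    calc (2 * ((n : ℝ) - M) + 1) = ((2 * ((n : ℤ) - M) + 1 : ℤ) : ℝ) := by push_cast; ring
    _ ≤ (((s + 1) * ((D ∩ Set.Icc (-(n : ℤ)) (n : ℤ)).ncard : ℤ) : ℤ) : ℝ) := by exact_mod_cast hZ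
    _ = ((s : ℝ) + 1) * ((D ∩ Set.Icc (-(n : ℤ)) (n : ℤ)).ncard : ℝ) := by push_cast; ring
  -- liminf argument
  have hspos : (0 : ℝ) < (s : ℝ) + 1 := by
    have : (1 : ℝ) ≤ (s : ℝ) := by exact_mod_cast hs
    linarith
  set g : ℕ → ℝ := fun n => 1 / ((s : ℝ) + 1) + (-(2 * M) / ((s : ℝ) + 1)) / (2 * (n : ℝ) + 1)
    with hg
  have hglim : Tendsto g atTop (nhds (1 / ((s : ℝ) + 1))) := aux_tendsto _ _
  have hev : ∀ᶠ n : ℕ in atTop, g n ≤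
      ((D ∩ Set.Icc (-(n : ℤ)) (n : ℤ)).ncard : ℝ) / (2 * (n : ℝ) + 1) := by
    filter_upwards [eventually_ge_atTop M] with n hn
    have hk := key n hn
    have hpos : (0 : ℝ) < 2 * (n : ℝ) + 1 := by positivity
    have hnum : (2 * ((n : ℝ) - M) + 1) / ((s : ℝ) + 1) ≤
        ((D ∩ Set.Icc (-(n : ℤ)) (n : ℤ)).ncard : ℝ) := by
      rw [div_le_iff₀ hspos]
      linarith [hk]
    have hgn : g n = ((2 * ((n : ℝ) - M) + 1) / ((s : ℝ) + 1)) / (2 * (n : ℝ) + 1) := by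
      rw [hg]
      field_simp
      ring
    rw [hgn]
    exact (div_le_div_iff_of_pos_right hpos).2 hnum
  have hbdd : IsBoundedUnder (fun x1 x2 => x1 ≥ x2) atTop g := hglim.isBoundedUnder_ge
  have hcob : IsCoboundedUnder (fun x1 x2 => x1 ≥ x2) atTop
      (fun n : ℕ => ((D ∩ Set.Icc (-(n : ℤ)) (n : ℤ)).ncard : ℝ) / (2 * (n : ℝ) + 1)) := by
    apply IsBoundedUnder.isCoboundedUnder_ge
    exact ⟨1, Filter.eventually_map.2 (Filter.Eventually.of_forall fun n => densfun_le_one D n)⟩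
  have := liminf_le_liminf hev hbdd hcob
  rwa [hglim.liminf_eq] at this

private lemma lowerDensity_le_mult (k : ℤ) (hk : 1 ≤ k) :
    lowerDensity {m : ℤ | k ∣ m} ≤ 1 / (k : ℝ) := by
  have hkpos : (0 : ℤ) < k := hk
  have hkR : (0 : ℝ) < (k : ℝ) := by exact_mod_cast hkpos
  have count : ∀ n : ℕ, (({m : ℤ | k ∣ m} ∩ Set.Icc (-(n : ℤ)) (n : ℤ)).ncard : ℝ) ≤
      2 * ((n : ℝ) / (k : ℝ)) + 1 := by
    intro n
    have hq : (0 : ℤ) ≤ (n : ℤ) / k := Int.ediv_nonneg (by positivity) (le_of_lt hkpos)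
    have hsub : {m : ℤ | k ∣ m} ∩ Set.Icc (-(n : ℤ)) (n : ℤ) ⊆
        (fun q => k * q) '' Set.Icc (-((n : ℤ) / k)) ((n : ℤ) / k) := by
      rintro m ⟨⟨q, rfl⟩, hm⟩
      rw [Set.mem_Icc] at hm
      refine ⟨q, Set.mem_Icc.2 ⟨?_, ?_⟩, rfl⟩
      · rw [neg_le, Int.le_ediv_iff_mul_le hkpos]
        nlinarith [hm.1]
      · rw [Int.le_ediv_iff_mul_le hkpos]
        nlinarith [hm.2]
    have h1 := (Set.ncard_le_ncard hsub ((Set.finite_Icc _ _).image _)).trans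
      (Set.ncard_image_le (Set.finite_Icc _ _))
    have h2 : (Set.Icc (-((n : ℤ) / k)) ((n : ℤ) / k)).ncard = (2 * ((n : ℤ) / k) + 1).toNat := by
      rw [← Finset.coe_Icc, Set.ncard_coe_finset, Int.card_Icc]; omega
    rw [h2] at h1
    have h3 : (({m : ℤ | k ∣ m} ∩ Set.Icc (-(n : ℤ)) (n : ℤ)).ncard : ℝ) ≤
        2 * ((((n : ℤ) / k : ℤ)) : ℝ) + 1 := by
      calc (({m : ℤ | k ∣ m} ∩ Set.Icc (-(n : ℤ)) (n : ℤ)).ncard : ℝ)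
          ≤ (((2 * ((n : ℤ) / k) + 1).toNat : ℕ) : ℝ) := by exact_mod_cast h1
        _ = 2 * ((((n : ℤ) / k : ℤ)) : ℝ) + 1 := by
            rw [← Int.cast_natCast, Int.toNat_of_nonneg (by omega)]; push_cast; ring
    have h5 : ((n : ℤ) / k) * k ≤ (n : ℤ) := (Int.le_ediv_iff_mul_le hkpos).1 le_rfl
    have h4 : ((((n : ℤ) / k : ℤ)) : ℝ) ≤ (n : ℝ) / (k : ℝ) := by
      rw [le_div_iff₀ hkR]
      exact_mod_cast h5
    linarith
  set h : ℕ → ℝ := fun n => 1 / (k : ℝ) + (((k : ℝ) - 1) / (k : ℝ)) / (2 * (n : ℝ) + 1) with hh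
  have hlim : Tendsto h atTop (nhds (1 / (k : ℝ))) := aux_tendsto _ _
  have hev : ∀ᶠ n : ℕ in atTop,
      (({m : ℤ | k ∣ m} ∩ Set.Icc (-(n : ℤ)) (n : ℤ)).ncard : ℝ) / (2 * (n : ℝ) + 1) ≤ h n := by
    refine Filter.Eventually.of_forall fun n => ?_
    have hpos : (0 : ℝ) < 2 * (n : ℝ) + 1 := by positivity
    have hhn : h n = (2 * ((n : ℝ) / (k : ℝ)) + 1) / (2 * (n : ℝ) + 1) := by
      rw [hh]
      field_simp
      ring
    rw [hhn]
    exact (div_le_div_iff_of_pos_right hpos).2 (count n)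
  have hbdd : IsBoundedUnder (fun x1 x2 => x1 ≥ x2) atTop
      (fun n : ℕ => (({m : ℤ | k ∣ m} ∩ Set.Icc (-(n : ℤ)) (n : ℤ)).ncard : ℝ) / (2 * (n : ℝ) + 1)) :=
    ⟨0, Filter.eventually_map.2 (Filter.Eventually.of_forall fun n => densfun_nonneg _ n)⟩
  have hcob : IsCoboundedUnder (fun x1 x2 => x1 ≥ x2) atTop h :=
    hlim.isBoundedUnder_le.isCoboundedUnder_ge
  have := liminf_le_liminf hev hbdd hcob
  rwa [hlim.liminf_eq] at this

theorem stmt_5 (s : ℤ) (hs : 1 ≤ s) (i : ℤ → ℤ)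
    (S : Set ℤ) (hS : S = {t : ℤ | ∃ j : ℤ, 1 ≤ j ∧ j ≤ s ∧ t = i j * (s + 1) + j}) :
    dominationRatio S = 1 / ((s : ℝ) + 1) ∧
      EffDominating S {m : ℤ | (s + 1) ∣ m} := by
  have hk1 : (1 : ℤ) ≤ s + 1 := by omega
  have hkpos : (0 : ℤ) < s + 1 := by omega
  -- the multiples of s+1 form a dominating set
  have hdom : Dominating S {m : ℤ | (s + 1) ∣ m} := by
    intro m
    by_cases h : (s + 1) ∣ m
    · exact Or.inl h
    · right
      have hmod : ¬ m % (s + 1) = 0 := fun hc => h (Int.dvd_of_emod_eq_zero hc)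
      set j := m % (s + 1) with hj
      have hj0 : 0 ≤ j := Int.emod_nonneg m (by omega)
      have hjlt : j < s + 1 := Int.emod_lt_of_pos m hkpos
      have hj1 : 1 ≤ j := by omega
      have em := Int.mul_ediv_add_emod m (s + 1)
      refine ⟨m - (i j * (s + 1) + j), ⟨m / (s + 1) - i j, by linear_combination -em⟩,
        i j * (s + 1) + j, ?_, by ring⟩
      rw [hS]
      exact ⟨j, hj1, by omega, rfl⟩
  have hdle : lowerDensity {m : ℤ | (s + 1) ∣ m} ≤ 1 / ((s : ℝ) + 1) := by
    have := lowerDensity_le_mult (s + 1) hk1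
    push_cast at this
    exact this
  constructor
  · have hne : (lowerDensity '' {D : Set ℤ | Dominating S D}).Nonempty :=
      ⟨_, ⟨_, hdom, rfl⟩⟩
    have hlb : ∀ x ∈ lowerDensity '' {D : Set ℤ | Dominating S D}, 1 / ((s : ℝ) + 1) ≤ x := by
      rintro x ⟨D, hD, rfl⟩
      exact lowerDensity_ge s hs i S hS D hD
    refine le_antisymm ?_ (le_csInf hne hlb)
    exact (csInf_le ⟨_, fun x hx => hlb x hx⟩ ⟨_, hdom, rfl⟩).trans hdle
  · intro m
    by_cases h : (s + 1) ∣ m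
    · refine ⟨m, ⟨h, Or.inl rfl⟩, ?_⟩
      rintro u ⟨hu, rfl | hmem⟩
      · rfl
      · exfalso
        rw [hS] at hmem
        obtain ⟨j, hj1, hj2, heq⟩ := hmem
        have hd1 : (s + 1) ∣ m - u := dvd_sub h hu
        rw [heq] at hd1
        have hd2 : (s + 1) ∣ j := (dvd_add_right ⟨i j, by ring⟩).mp hd1
        have := Int.le_of_dvd (by omega) hd2
        omega
    · have hmod : ¬ m % (s + 1) = 0 := fun hc => h (Int.dvd_of_emod_eq_zero hc)
      set j := m % (s + 1) with hj
      have hj0 : 0 ≤ j := Int.emod_nonneg m (by omega)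
      have hjlt : j < s + 1 := Int.emod_lt_of_pos m hkpos
      have hj1 : 1 ≤ j := by omega
      have em := Int.mul_ediv_add_emod m (s + 1)
      refine ⟨m - (i j * (s + 1) + j),
        ⟨⟨m / (s + 1) - i j, by linear_combination -em⟩, Or.inr ?_⟩, ?_⟩
      · rw [hS]
        exact ⟨j, hj1, by omega, by ring⟩
      · rintro u ⟨⟨c, rfl⟩, rfl | hmem⟩
        · exact absurd ⟨c, rfl⟩ h
        · rw [hS] at hmem
          obtain ⟨j', hj'1, hj'2, heq⟩ := hmem
          have hm' : m = j' + (s + 1) * (c + i j') := by linarith [heq]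
          have hmodj' : m % (s + 1) = j' := by
            rw [hm', Int.add_mul_emod_self_left]
            exact Int.emod_eq_of_lt (by omega) (by omega)
          have hjj' : j' = j := by omega
          subst hjj'
          omega
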